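/- Let n ≥ 3 and x ≥ 1 be integers, and let G be the graph consisting of a disjoint union of x cycles of order n. Then OCN(G) = n(n-2)x(x-1). -/

import Mathlib

noncomputable section

/-- A rectilinear drawing of a finite simple graph `G`: an injective map of the
vertices to points of the plane `ℝ × ℝ` in general position (no three collinear);
each edge is drawn as the straight-line segment between the images of its endpoints. -/
structure OrchardDrawing {V : Type*} (G : SimpleGraph V) where
  pos : V → ℝ × ℝ
  inj : Function.Injective pos
  genPos : ∀ u v w : V, u ≠ v → u ≠ w → v ≠ w →
    ¬ Collinear ℝ ({pos u, pos v, pos w} : Set (ℝ × ℝ))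

/-- The number of Orchard crossings of a drawing: the number of pairs
`(e, e')` where `e = {s,t}` is an edge of `G` and `e' = {u,v}` is an unordered pair of
distinct vertices with `{u,v} ≠ {s,t}` such that the straight line through the images of
`u` and `v` meets the open segment joining the images of `s` and `t`.
This equals `Σ_{(s,t) ∈ E} c(s,t)`. -/
def orchardCrossings {V : Type*} {G : SimpleGraph V} (D : OrchardDrawing G) : ℕ :=
  Nat.card {q : Sym2 V × Sym2 V //
    q.1 ∈ G.edgeSet ∧ q.2 ≠ q.1 ∧ ¬ q.2.IsDiag ∧
    ∃ u v s t : V, q.2 = s(u, v) ∧ q.1 = s(s, t) ∧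
      ∃ p ∈ openSegment ℝ (D.pos s) (D.pos t),
        Collinear ℝ ({D.pos u, D.pos v, p} : Set (ℝ × ℝ))}

/-- The Orchard crossing number of a finite simple graph: the minimum of the number of
Orchard crossings over all rectilinear drawings. -/
def OCN {V : Type*} [Fintype V] (G : SimpleGraph V) : ℕ :=
  sInf {m : ℕ | ∃ D : OrchardDrawing G, orchardCrossings D = m}

/-- The disjoint union of `x` cycles of order `n` (for `n ≥ 3`): vertices `(i, a)` for
`i : Fin x`, `a : Fin n`; two vertices are adjacent iff they lie in the same cycle and
are consecutive (mod `n`) in it. -/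
def disjointCycles (x n : ℕ) : SimpleGraph (Fin x × Fin n) :=
  SimpleGraph.fromRel (fun u v => u.1 = v.1 ∧ ((u.2 : ℕ) + 1) % n = (v.2 : ℕ))


noncomputable section
namespace OrchardAux

def det2 (w z : ℝ × ℝ) : ℝ := w.1 * z.2 - w.2 * z.1

lemma det2_swap (w z : ℝ × ℝ) : det2 w z = - det2 z w := by simp [det2]; ring

lemma exists_smul_of_det2 {w z : ℝ × ℝ} (hw : w ≠ 0) (h : det2 w z = 0) :
    ∃ t : ℝ, z = t • w := by
  have hdet : w.1 * z.2 - w.2 * z.1 = 0 := h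
  by_cases h1 : w.1 ≠ 0
  · refine ⟨z.1 / w.1, ?_⟩
    have hz2 : z.2 = z.1 / w.1 * w.2 := by field_simp; linarith
    have hz1 : z.1 = z.1 / w.1 * w.1 := by field_simp
    ext
    · simpa using hz1
    · simpa using hz2
  · push_neg at h1
    have h2 : w.2 ≠ 0 := by
      intro h2
      exact hw (Prod.ext h1 h2)
    refine ⟨z.2 / w.2, ?_⟩
    have hz1 : z.1 = z.2 / w.2 * w.1 := by field_simp; linarith
    have hz2 : z.2 = z.2 / w.2 * w.2 := by field_simp
    ext
    · simpa using hz1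
    · simpa using hz2

lemma collinear_iff_det2 {P Q R : ℝ × ℝ} :
    Collinear ℝ ({P, Q, R} : Set (ℝ × ℝ)) ↔ det2 (Q - P) (R - P) = 0 := by
  rw [collinear_iff_of_mem (Set.mem_insert P {Q, R})]
  constructor
  · rintro ⟨v, hv⟩
    obtain ⟨rq, hq⟩ := hv Q (by simp)
    obtain ⟨rr, hr⟩ := hv R (by simp)
    rw [hq, hr]
    simp [det2, vadd_eq_add]
    ring
  · intro h
    by_cases hQP : Q - P = 0
    · refine ⟨R - P, ?_⟩
      intro p hp
      simp only [Set.mem_insert_iff, Set.mem_singleton_iff] at hp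
      have hQ : Q = P := by rwa [sub_eq_zero] at hQP
      rcases hp with h' | h' | h'
      · exact ⟨0, by rw [h']; simp [vadd_eq_add]⟩
      · exact ⟨0, by rw [h', hQ]; simp [vadd_eq_add]⟩
      · exact ⟨1, by rw [h']; simp [vadd_eq_add]⟩
    · refine ⟨Q - P, ?_⟩
      intro p hp
      simp only [Set.mem_insert_iff, Set.mem_singleton_iff] at hp
      rcases hp with h' | h' | h'
      · exact ⟨0, by rw [h']; simp [vadd_eq_add]⟩
      · exact ⟨1, by rw [h']; simp [vadd_eq_add]⟩
      · obtain ⟨t, ht⟩ := exists_smul_of_det2 hQP h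
        refine ⟨t, ?_⟩
        have hR : R = t • (Q - P) + P := by rw [← ht]; abel
        rw [h', hR]
        simp [vadd_eq_add]

lemma det2_affine (w S T B : ℝ × ℝ) (c d : ℝ) (h : c + d = 1) :
    det2 w ((c • S + d • T) - B) = c * det2 w (S - B) + d * det2 w (T - B) := by
  have hd : d = 1 - c := by linarith
  subst hd
  simp [det2, Prod.smul_def, smul_eq_mul]
  ring

lemma cross_of_sign {B U S T : ℝ × ℝ}
    (h : det2 (U - B) (S - B) * det2 (U - B) (T - B) < 0) :
    ∃ p ∈ openSegment ℝ S T, Collinear ℝ ({B, U, p} : Set (ℝ × ℝ)) := by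
  set fS := det2 (U - B) (S - B) with hfS
  set fT := det2 (U - B) (T - B) with hfT
  have hden : fS - fT ≠ 0 := by
    rcases mul_neg_iff.mp h with ⟨h1, h2⟩ | ⟨h1, h2⟩ <;> intro h0 <;> nlinarith
  set c := -fT / (fS - fT) with hc
  set d := fS / (fS - fT) with hd
  have hcd : c + d = 1 := by rw [hc, hd]; field_simp; ring
  have hcpos : 0 < c := by
    rcases mul_neg_iff.mp h with ⟨h1, h2⟩ | ⟨h1, h2⟩
    · apply div_pos (by linarith) (by linarith)
    · rw [hc, div_pos_iff]
      right
      constructor <;> linarith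
  have hdpos : 0 < d := by
    rcases mul_neg_iff.mp h with ⟨h1, h2⟩ | ⟨h1, h2⟩
    · apply div_pos (by linarith) (by linarith)
    · rw [hd, div_pos_iff]
      right
      constructor <;> linarith
  refine ⟨c • S + d • T, ⟨c, d, hcpos, hdpos, hcd, rfl⟩, ?_⟩
  rw [collinear_iff_det2]
  rw [det2_affine _ _ _ _ _ _ hcd, ← hfS, ← hfT]
  rw [hc, hd]
  field_simp
  ring

lemma sign_of_cross {B U S T : ℝ × ℝ}
    (h : ∃ p ∈ openSegment ℝ S T, Collinear ℝ ({B, U, p} : Set (ℝ × ℝ))) :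
    ∃ c d : ℝ, 0 < c ∧ 0 < d ∧
      c * det2 (U - B) (S - B) + d * det2 (U - B) (T - B) = 0 := by
  obtain ⟨p, ⟨c, d, hc, hd, hcd, rfl⟩, hcol⟩ := h
  rw [collinear_iff_det2, det2_affine _ _ _ _ _ _ hcd] at hcol
  exact ⟨c, d, hc, hd, hcol⟩

lemma opp_sign {c d fS fT : ℝ} (hc : 0 < c) (hd : 0 < d)
    (h : c * fS + d * fT = 0) (hS : fS ≠ 0) (hT : fT ≠ 0) : fS * fT < 0 := by
  rcases hS.lt_or_gt with h1 | h1 <;> rcases hT.lt_or_gt with h2 | h2 <;> nlinarith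

lemma same_sign_of_not_neg {a b : ℝ} (ha : a ≠ 0) (hb : b ≠ 0) (h : ¬ a * b < 0) :
    (0 < a ↔ 0 < b) := by
  rcases ha.lt_or_gt with h1 | h1 <;> rcases hb.lt_or_gt with h2 | h2 <;>
    constructor <;> intro hh
  · linarith
  · linarith
  · linarith
  · exfalso; exact h (mul_neg_of_neg_of_pos h1 h2)
  · exfalso; exact h (mul_neg_of_pos_of_neg h1 h2)
  · linarith
  · linarith
  · linarith

lemma det2_parabola (a b c : ℝ) :
    det2 ((b, b ^ 2) - (a, a ^ 2)) ((c, c ^ 2) - (a, a ^ 2)) = (b - a) * (c - a) * (c - b) := by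
  simp only [det2, Prod.mk_sub_mk]
  ring

lemma int_no_consec {A B S : ℤ} (h : (S - A) * (S - B) * ((S + 1 - A) * (S + 1 - B)) < 0) :
    False := by
  rcases mul_neg_iff.mp h with ⟨h1, h2⟩ | ⟨h1, h2⟩
  · rcases mul_pos_iff.mp h1 with ⟨h3, h4⟩ | ⟨h3, h4⟩ <;>
      rcases mul_neg_iff.mp h2 with ⟨h5, h6⟩ | ⟨h5, h6⟩ <;> omega
  · rcases mul_neg_iff.mp h1 with ⟨h3, h4⟩ | ⟨h3, h4⟩ <;>
      rcases mul_pos_iff.mp h2 with ⟨h5, h6⟩ | ⟨h5, h6⟩ <;> omega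

lemma int_between {A B L R : ℤ} (hLR : L < R)
    (h : (R - A) * (R - B) * ((L - A) * (L - B)) < 0) :
    (L < A ∧ A < R ∧ (B < L ∨ R < B)) ∨ (L < B ∧ B < R ∧ (A < L ∨ R < A)) := by
  rcases mul_neg_iff.mp h with ⟨h1, h2⟩ | ⟨h1, h2⟩
  · rcases mul_pos_iff.mp h1 with ⟨h3, h4⟩ | ⟨h3, h4⟩ <;>
      rcases mul_neg_iff.mp h2 with ⟨h5, h6⟩ | ⟨h5, h6⟩ <;> omega
  · rcases mul_neg_iff.mp h1 with ⟨h3, h4⟩ | ⟨h3, h4⟩ <;>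
      rcases mul_pos_iff.mp h2 with ⟨h5, h6⟩ | ⟨h5, h6⟩ <;> omega

end OrchardAux

namespace OrchardAux

lemma nat_window {n i j a : ℕ} (ha : a < n) (h1 : i*n < j*n + a)
    (h2 : j*n + a < i*n + (n-1)) : j = i ∧ 1 ≤ a ∧ a ≤ n - 2 := by
  have hji : j = i := by
    rcases Nat.lt_trichotomy j i with h | h | h
    · exfalso
      have key : j*n + n ≤ i*n := by
        have := Nat.mul_le_mul_right n (Nat.succ_le_of_lt h)
        rwa [Nat.succ_mul] at this
      omega
    · exact h
    · exfalso
      have key : i*n + n ≤ j*n := by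
        have := Nat.mul_le_mul_right n (Nat.succ_le_of_lt h)
        rwa [Nat.succ_mul] at this
      omega
  subst hji
  omega

lemma nat_outside {n i j a : ℕ} (ha : a < n)
    (h : j*n + a < i*n ∨ i*n + (n-1) < j*n + a) : j ≠ i := by
  rintro rfl
  omega

variable {x n : ℕ}

def iot (v : Fin x × Fin n) : ℕ := (v.1 : ℕ) * n + (v.2 : ℕ)

lemma iot_inj : Function.Injective (iot (x := x) (n := n)) := by
  intro u v h
  have h2 : (u.2 : ℕ) < n := u.2.isLt
  have h2' : (v.2 : ℕ) < n := v.2.isLt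
  have hfst : (u.1 : ℕ) = (v.1 : ℕ) := by
    rcases Nat.lt_trichotomy (u.1 : ℕ) (v.1 : ℕ) with hlt | heq | hlt
    · exfalso
      have key : (u.1:ℕ)*n + n ≤ (v.1:ℕ)*n := by
        have := Nat.mul_le_mul_right n (Nat.succ_le_of_lt hlt)
        rwa [Nat.succ_mul] at this
      simp only [iot] at h
      omega
    · exact heq
    · exfalso
      have key : (v.1:ℕ)*n + n ≤ (u.1:ℕ)*n := by
        have := Nat.mul_le_mul_right n (Nat.succ_le_of_lt hlt)
        rwa [Nat.succ_mul] at this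
      simp only [iot] at h
      omega
  simp only [iot, hfst] at h
  have hsnd : (u.2 : ℕ) = (v.2 : ℕ) := by omega
  exact Prod.ext (Fin.ext hfst) (Fin.ext hsnd)

def ppos (v : Fin x × Fin n) : ℝ × ℝ := ((iot v : ℝ), (iot v : ℝ) ^ 2)

lemma ppos_inj : Function.Injective (ppos (x := x) (n := n)) := by
  intro u v h
  apply iot_inj (x := x) (n := n)
  have := congrArg Prod.fst h
  simp only [ppos] at this
  exact_mod_cast this

lemma ppos_det (u v w : Fin x × Fin n) :
    det2 (ppos v - ppos u) (ppos w - ppos u) =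
      ((iot v : ℝ) - (iot u : ℝ)) * ((iot w : ℝ) - (iot u : ℝ)) *
        ((iot w : ℝ) - (iot v : ℝ)) :=
  det2_parabola (iot u : ℝ) (iot v : ℝ) (iot w : ℝ)

lemma iot_cast_ne {u v : Fin x × Fin n} (h : u ≠ v) : (iot u : ℝ) ≠ (iot v : ℝ) := by
  intro h0
  exact h (iot_inj (by exact_mod_cast h0))

def Dpar (x n : ℕ) : OrchardDrawing (disjointCycles x n) where
  pos := ppos
  inj := ppos_inj
  genPos := by
    intro u v w huv huw hvw hcol
    rw [collinear_iff_det2, ppos_det] at hcol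
    rcases mul_eq_zero.mp hcol with h | h
    · rcases mul_eq_zero.mp h with h | h
      · exact iot_cast_ne huv (by linarith [sub_eq_zero.mp h])
      · exact iot_cast_ne huw (by linarith [sub_eq_zero.mp h])
    · exact iot_cast_ne hvw (by linarith [sub_eq_zero.mp h])

end OrchardAux

namespace OrchardAux

variable {x n : ℕ}

def CrossCond {V : Type*} {G : SimpleGraph V} (D : OrchardDrawing G)
    (q : Sym2 V × Sym2 V) : Prop :=
  q.1 ∈ G.edgeSet ∧ q.2 ≠ q.1 ∧ ¬ q.2.IsDiag ∧
    ∃ u v s t : V, q.2 = s(u, v) ∧ q.1 = s(s, t) ∧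
      ∃ p ∈ openSegment ℝ (D.pos s) (D.pos t),
        Collinear ℝ ({D.pos u, D.pos v, p} : Set (ℝ × ℝ))

lemma orchardCrossings_eq {V : Type*} {G : SimpleGraph V} (D : OrchardDrawing G) :
    orchardCrossings D = Nat.card {q // CrossCond D q} := rfl

lemma upper_core (hn : 3 ≤ n) {u v s t : Fin x × Fin n}
    (huv : u ≠ v) (hst : s ≠ t) (hstc : s.1 = t.1)
    (hrel : ((s.2 : ℕ) + 1) % n = (t.2 : ℕ))
    (hne : s(u, v) ≠ s(s, t))
    (hcross : ∃ p ∈ openSegment ℝ (ppos s) (ppos t),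
        Collinear ℝ ({ppos u, ppos v, p} : Set (ℝ × ℝ))) :
    (s.2 : ℕ) = n - 1 ∧ (t.2 : ℕ) = 0 ∧
      ((u.1 = s.1 ∧ 1 ≤ (u.2 : ℕ) ∧ (u.2 : ℕ) ≤ n - 2 ∧ v.1 ≠ s.1) ∨
       (v.1 = s.1 ∧ 1 ≤ (v.2 : ℕ) ∧ (v.2 : ℕ) ≤ n - 2 ∧ u.1 ≠ s.1)) := by
  obtain ⟨c, d, hc, hd, heq⟩ := sign_of_cross hcross
  rw [ppos_det, ppos_det] at heq
  set αr := (iot u : ℝ) with hαr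
  set βr := (iot v : ℝ) with hβr
  set σr := (iot s : ℝ) with hσr
  set τr := (iot t : ℝ) with hτr
  have hβα : βr - αr ≠ 0 := sub_ne_zero.mpr (Ne.symm (iot_cast_ne huv))
  -- derive that both determinant values are nonzero
  have hs_mem : (βr - αr) * (σr - αr) * (σr - βr) = 0 → s = u ∨ s = v := by
    intro h0
    rcases mul_eq_zero.mp h0 with h1 | h1
    · rcases mul_eq_zero.mp h1 with h2 | h2
      · exact absurd h2 hβα
      · left
        have h3 := sub_eq_zero.mp h2
        rw [hσr, hαr] at h3
        exact iot_inj (by exact_mod_cast h3)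
    · right
      have h3 := sub_eq_zero.mp h1
      rw [hσr, hβr] at h3
      exact iot_inj (by exact_mod_cast h3)
  have ht_mem : (βr - αr) * (τr - αr) * (τr - βr) = 0 → t = u ∨ t = v := by
    intro h0
    rcases mul_eq_zero.mp h0 with h1 | h1
    · rcases mul_eq_zero.mp h1 with h2 | h2
      · exact absurd h2 hβα
      · left
        have h3 := sub_eq_zero.mp h2
        rw [hτr, hαr] at h3
        exact iot_inj (by exact_mod_cast h3)
    · right
      have h3 := sub_eq_zero.mp h1
      rw [hτr, hβr] at h3
      exact iot_inj (by exact_mod_cast h3)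
  have hcontra : ¬ ((βr - αr) * (σr - αr) * (σr - βr) = 0 ∧
      (βr - αr) * (τr - αr) * (τr - βr) = 0) := by
    rintro ⟨h1, h2⟩
    rcases hs_mem h1 with rfl | rfl <;> rcases ht_mem h2 with rfl | rfl
    · exact hst rfl
    · exact hne rfl
    · exact hne Sym2.eq_swap
    · exact hst rfl
  have hfS : (βr - αr) * (σr - αr) * (σr - βr) ≠ 0 := by
    intro h0
    have hT0 : (βr - αr) * (τr - αr) * (τr - βr) = 0 := by
      rw [h0, mul_zero, zero_add] at heq
      exact (mul_eq_zero.mp heq).resolve_left (ne_of_gt hd)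
    exact hcontra ⟨h0, hT0⟩
  have hfT : (βr - αr) * (τr - αr) * (τr - βr) ≠ 0 := by
    intro h0
    have hS0 : (βr - αr) * (σr - αr) * (σr - βr) = 0 := by
      rw [h0, mul_zero, add_zero] at heq
      exact (mul_eq_zero.mp heq).resolve_left (ne_of_gt hc)
    exact hcontra ⟨hS0, h0⟩
  have hprod := opp_sign hc hd heq hfS hfT
  have hsq : 0 < (βr - αr) ^ 2 := by
    rcases hβα.lt_or_gt with h | h <;> nlinarith
  have hX : (σr - αr) * (σr - βr) * ((τr - αr) * (τr - βr)) < 0 := by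
    have hkey : (βr - αr) ^ 2 * ((σr - αr) * (σr - βr) * ((τr - αr) * (τr - βr))) =
        ((βr - αr) * (σr - αr) * (σr - βr)) * ((βr - αr) * (τr - αr) * (τr - βr)) := by
      ring
    by_contra hX0
    push_neg at hX0
    nlinarith [mul_nonneg hsq.le hX0]
  have hXZ : ((iot s : ℤ) - (iot u : ℤ)) * ((iot s : ℤ) - (iot v : ℤ)) *
      (((iot t : ℤ) - (iot u : ℤ)) * ((iot t : ℤ) - (iot v : ℤ))) < 0 := by
    rw [hαr, hβr, hσr, hτr] at hX
    exact_mod_cast hX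
  have hu2 : (u.2 : ℕ) < n := u.2.isLt
  have hv2 : (v.2 : ℕ) < n := v.2.isLt
  have hs2lt : (s.2 : ℕ) < n := s.2.isLt
  by_cases hcase : (s.2 : ℕ) + 1 < n
  · exfalso
    have ht2 : (t.2 : ℕ) = (s.2 : ℕ) + 1 := by
      rw [← hrel, Nat.mod_eq_of_lt hcase]
    have ht1 : (t.1 : ℕ) = (s.1 : ℕ) := by rw [← hstc]
    have hts : iot t = iot s + 1 := by
      simp only [iot, ht1, ht2]
      omega
    have hZ : (iot t : ℤ) = (iot s : ℤ) + 1 := by exact_mod_cast hts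
    rw [hZ] at hXZ
    exact int_no_consec hXZ
  · push_neg at hcase
    have hs2 : (s.2 : ℕ) = n - 1 := by omega
    have ht2 : (t.2 : ℕ) = 0 := by
      have hne1 : (s.2 : ℕ) + 1 = n := by omega
      rw [hne1, Nat.mod_self] at hrel
      omega
    have ht1 : (t.1 : ℕ) = (s.1 : ℕ) := by rw [← hstc]
    have hLs : iot s = (s.1 : ℕ) * n + (n - 1) := by simp only [iot, hs2]
    have hLt : iot t = (s.1 : ℕ) * n := by simp only [iot, ht1, ht2]; omega
    have hLR : (iot t : ℤ) < (iot s : ℤ) := by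
      have : iot t < iot s := by rw [hLs, hLt]; omega
      exact_mod_cast this
    have hb := int_between hLR hXZ
    refine ⟨hs2, ht2, ?_⟩
    rcases hb with ⟨h1, h2, h3⟩ | ⟨h1, h2, h3⟩
    · -- u strictly inside
      left
      have h1' : iot t < iot u := by exact_mod_cast h1
      have h2' : iot u < iot s := by exact_mod_cast h2
      rw [hLt] at h1'
      rw [hLs] at h2'
      have hw := nat_window hu2 (show (s.1:ℕ)*n < (u.1:ℕ)*n + (u.2:ℕ) from h1')
        (show (u.1:ℕ)*n + (u.2:ℕ) < (s.1:ℕ)*n + (n-1) from h2')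
      have h3' : iot v < iot t ∨ iot s < iot v := by
        rcases h3 with h | h
        · exact Or.inl (by exact_mod_cast h)
        · exact Or.inr (by exact_mod_cast h)
      rw [hLt, hLs] at h3'
      have hout := nat_outside hv2 (show (v.1:ℕ)*n + (v.2:ℕ) < (s.1:ℕ)*n ∨
          (s.1:ℕ)*n + (n-1) < (v.1:ℕ)*n + (v.2:ℕ) from h3')
      exact ⟨Fin.ext hw.1, hw.2.1, hw.2.2, fun h => hout (congrArg Fin.val h)⟩
    · -- v strictly inside
      right
      have h1' : iot t < iot v := by exact_mod_cast h1
      have h2' : iot v < iot s := by exact_mod_cast h2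
      rw [hLt] at h1'
      rw [hLs] at h2'
      have hw := nat_window hv2 (show (s.1:ℕ)*n < (v.1:ℕ)*n + (v.2:ℕ) from h1')
        (show (v.1:ℕ)*n + (v.2:ℕ) < (s.1:ℕ)*n + (n-1) from h2')
      have h3' : iot u < iot t ∨ iot s < iot u := by
        rcases h3 with h | h
        · exact Or.inl (by exact_mod_cast h)
        · exact Or.inr (by exact_mod_cast h)
      rw [hLt, hLs] at h3'
      have hout := nat_outside hu2 (show (u.1:ℕ)*n + (u.2:ℕ) < (s.1:ℕ)*n ∨
          (s.1:ℕ)*n + (n-1) < (u.1:ℕ)*n + (u.2:ℕ) from h3')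
      exact ⟨Fin.ext hw.1, hw.2.1, hw.2.2, fun h => hout (congrArg Fin.val h)⟩

end OrchardAux

namespace OrchardAux

variable {x n : ℕ}

lemma upper_extract (hn : 3 ≤ n) (q : Sym2 (Fin x × Fin n) × Sym2 (Fin x × Fin n))
    (hq : CrossCond (Dpar x n) q) :
    ∃ u' v' : Fin x × Fin n,
      q.2 = s(u', v') ∧
      q.1 = s((u'.1, (⟨0, by omega⟩ : Fin n)), (u'.1, (⟨n - 1, by omega⟩ : Fin n))) ∧
      1 ≤ (u'.2 : ℕ) ∧ (u'.2 : ℕ) ≤ n - 2 ∧ v'.1 ≠ u'.1 := by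
  obtain ⟨hedge, hne, hdiag, u, v, s0, t0, hq2, hq1, hcross⟩ := hq
  have huv : u ≠ v := by
    rw [hq2] at hdiag
    simpa [Sym2.mk_isDiag_iff] using hdiag
  rw [hq1, SimpleGraph.mem_edgeSet] at hedge
  rw [disjointCycles, SimpleGraph.fromRel_adj] at hedge
  obtain ⟨hst, hrel⟩ := hedge
  rw [hq1, hq2] at hne
  have hcross' : ∃ p ∈ openSegment ℝ (ppos s0) (ppos t0),
      Collinear ℝ ({ppos u, ppos v, p} : Set (ℝ × ℝ)) := hcross
  rcases hrel with ⟨hc1, hc2⟩ | ⟨hc1, hc2⟩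
  · obtain ⟨hs2, ht2, hdisj⟩ := upper_core hn huv hst hc1 hc2 hne hcross'
    rcases hdisj with ⟨h1, h2, h3, h4⟩ | ⟨h1, h2, h3, h4⟩
    · refine ⟨u, v, hq2, ?_, h2, h3, by rw [h1]; exact h4⟩
      have hs0 : s0 = (u.1, (⟨n - 1, by omega⟩ : Fin n)) := by
        apply Prod.ext
        · exact h1.symm
        · exact Fin.ext hs2
      have ht0 : t0 = (u.1, (⟨0, by omega⟩ : Fin n)) := by
        apply Prod.ext
        · rw [← hc1, h1]
        · exact Fin.ext (by simpa using ht2)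
      rw [hq1, hs0, ht0]
      exact Sym2.eq_swap
    · refine ⟨v, u, by rw [hq2]; exact Sym2.eq_swap, ?_, h2, h3, by rw [h1]; exact h4⟩
      have hs0 : s0 = (v.1, (⟨n - 1, by omega⟩ : Fin n)) := by
        apply Prod.ext
        · exact h1.symm
        · exact Fin.ext hs2
      have ht0 : t0 = (v.1, (⟨0, by omega⟩ : Fin n)) := by
        apply Prod.ext
        · rw [← hc1, h1]
        · exact Fin.ext (by simpa using ht2)
      rw [hq1, hs0, ht0]
      exact Sym2.eq_swap
  · -- reversed orientation: apply core with (t0, s0)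
    have hne' : s(u, v) ≠ s(t0, s0) := by rw [Sym2.eq_swap (a := t0)]; exact hne
    have hcross'' : ∃ p ∈ openSegment ℝ (ppos t0) (ppos s0),
        Collinear ℝ ({ppos u, ppos v, p} : Set (ℝ × ℝ)) := by
      rwa [openSegment_symm]
    obtain ⟨hs2, ht2, hdisj⟩ := upper_core hn huv (Ne.symm hst) hc1 hc2 hne' hcross''
    rcases hdisj with ⟨h1, h2, h3, h4⟩ | ⟨h1, h2, h3, h4⟩
    · refine ⟨u, v, hq2, ?_, h2, h3, by rw [h1]; exact h4⟩
      have hs0 : t0 = (u.1, (⟨n - 1, by omega⟩ : Fin n)) := by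
        apply Prod.ext
        · exact h1.symm
        · exact Fin.ext hs2
      have ht0 : s0 = (u.1, (⟨0, by omega⟩ : Fin n)) := by
        apply Prod.ext
        · rw [← hc1, h1]
        · exact Fin.ext (by simpa using ht2)
      rw [hq1, hs0, ht0]
    · refine ⟨v, u, by rw [hq2]; exact Sym2.eq_swap, ?_, h2, h3, by rw [h1]; exact h4⟩
      have hs0 : t0 = (v.1, (⟨n - 1, by omega⟩ : Fin n)) := by
        apply Prod.ext
        · exact h1.symm
        · exact Fin.ext hs2
      have ht0 : s0 = (v.1, (⟨0, by omega⟩ : Fin n)) := by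
        apply Prod.ext
        · rw [← hc1, h1]
        · exact Fin.ext (by simpa using ht2)
      rw [hq1, hs0, ht0]

end OrchardAux

namespace OrchardAux

variable {x n : ℕ}

lemma card_mid (hn : 3 ≤ n) :
    Nat.card {a : Fin n // 1 ≤ (a : ℕ) ∧ (a : ℕ) ≤ n - 2} = n - 2 := by
  have e : {a : Fin n // 1 ≤ (a : ℕ) ∧ (a : ℕ) ≤ n - 2} ≃ Fin (n - 2) := by
    refine ⟨fun a => ⟨a.val.val - 1, by have := a.2; omega⟩,
      fun k => ⟨⟨k.val + 1, by have := k.isLt; omega⟩, by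
        constructor
        · simp
        · simp only [Fin.val_mk]; have := k.isLt; omega⟩, ?_, ?_⟩
    · intro a
      apply Subtype.ext
      apply Fin.ext
      simp only [Fin.val_mk]
      have := a.2
      omega
    · intro k
      apply Fin.ext
      simp only [Fin.val_mk]
      omega
  rw [Nat.card_eq_fintype_card, Fintype.card_congr e, Fintype.card_fin]

lemma card_offdiag :
    Nat.card {ij : Fin x × Fin x // ij.1 ≠ ij.2} = x * x - x := by
  rw [Nat.card_eq_fintype_card]
  have h1 : Fintype.card {ij : Fin x × Fin x // ij.1 = ij.2} = x := by
    have e : {ij : Fin x × Fin x // ij.1 = ij.2} ≃ Fin x := by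
      refine ⟨fun p => p.val.1, fun i => ⟨(i, i), rfl⟩, ?_, ?_⟩
      · rintro ⟨⟨a, b⟩, h⟩
        exact Subtype.ext (Prod.ext rfl h)
      · intro i
        rfl
    rw [Fintype.card_congr e, Fintype.card_fin]
  calc Fintype.card {ij : Fin x × Fin x // ij.1 ≠ ij.2}
      = Fintype.card (Fin x × Fin x) - Fintype.card {ij : Fin x × Fin x // ij.1 = ij.2} :=
        Fintype.card_subtype_compl _
    _ = x * x - x := by rw [h1, Fintype.card_prod, Fintype.card_fin]

lemma upper_bound (hn : 3 ≤ n) :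
    orchardCrossings (Dpar x n) ≤ n * (n - 2) * x * (x - 1) := by
  classical
  rw [orchardCrossings_eq]
  have hmap := fun q : {q // CrossCond (Dpar x n) q} => upper_extract hn q.1 q.2
  choose u' v' h1 h2 h3 h4 h5 using hmap
  set P := ({a : Fin n // 1 ≤ (a : ℕ) ∧ (a : ℕ) ≤ n - 2} ×
    {ij : Fin x × Fin x // ij.1 ≠ ij.2} × Fin n) with hP
  have hinj : Function.Injective (fun q : {q // CrossCond (Dpar x n) q} =>
      ((⟨(u' q).2, h3 q, h4 q⟩, ⟨((v' q).1, (u' q).1), h5 q⟩, (v' q).2) : P)) := by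
    intro q q' h
    simp only [Prod.ext_iff, Subtype.ext_iff] at h
    obtain ⟨e1, ⟨e2a, e2b⟩, e3⟩ := h
    have hu : u' q = u' q' := Prod.ext e2b e1
    have hv : v' q = v' q' := Prod.ext e2a e3
    apply Subtype.ext
    apply Prod.ext
    · rw [h2 q, h2 q', hu]
    · rw [h1 q, h1 q', hu, hv]
  have hle := Nat.card_le_card_of_injective _ hinj
  have hcard : Nat.card P = (n - 2) * ((x * x - x) * n) := by
    rw [hP, Nat.card_prod, Nat.card_prod, card_mid hn, card_offdiag, Nat.card_eq_fintype_card,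
      Fintype.card_fin]
  have hxx : x * x - x = x * (x - 1) := by
    rcases x with _ | x'
    · simp
    · have hr : (x' + 1) * (x' + 1) = (x' + 1) * x' + (x' + 1) := by ring
      have hr2 : x' + 1 - 1 = x' := by omega
      rw [hr2]
      omega
  rw [hcard, hxx] at hle
  refine le_trans hle (le_of_eq ?_)
  obtain ⟨m, hm⟩ : ∃ m, n - 2 = m := ⟨_, rfl⟩
  obtain ⟨y, hy⟩ : ∃ y, x - 1 = y := ⟨_, rfl⟩
  rw [hm, hy]
  ring

end OrchardAux

namespace OrchardAux

variable {x n : ℕ}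

def fdet (D : OrchardDrawing (disjointCycles x n)) (b u v : Fin x × Fin n) : ℝ :=
  det2 (D.pos u - D.pos b) (D.pos v - D.pos b)

lemma fdet_ne (D : OrchardDrawing (disjointCycles x n)) {b u v : Fin x × Fin n}
    (h1 : b ≠ u) (h2 : b ≠ v) (h3 : u ≠ v) : fdet D b u v ≠ 0 := by
  intro h0
  exact D.genPos b u v h1 h2 h3 (collinear_iff_det2.mpr h0)

lemma fdet_swap (D : OrchardDrawing (disjointCycles x n)) (b u v : Fin x × Fin n) :
    fdet D b u v = - fdet D b v u := det2_swap _ _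

def NonExt (D : OrchardDrawing (disjointCycles x n)) (b u : Fin x × Fin n) : Prop :=
  ∃ v w : Fin x × Fin n, v.1 = u.1 ∧ w.1 = u.1 ∧ v ≠ u ∧ w ≠ u ∧
    0 < fdet D b u v ∧ fdet D b u w < 0

open Fin.NatCast Fin.CommRing in
lemma nonext_crossing (D : OrchardDrawing (disjointCycles x n)) (hn : 3 ≤ n)
    {b u : Fin x × Fin n} (hbu : b.1 ≠ u.1) (hne : NonExt D b u) :
    ∃ e : Sym2 (Fin x × Fin n),
      (∃ s t : Fin x × Fin n, e = s(s, t) ∧ s.1 = u.1 ∧ t.1 = u.1) ∧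
      CrossCond D (e, s(b, u)) := by
  haveI : NeZero n := ⟨by omega⟩
  obtain ⟨v, w, hv1, hw1, hvu, hwu, hvpos, hwneg⟩ := hne
  set W : Fin n → Fin x × Fin n := fun d => (u.1, u.2 + d) with hWdef
  have hone : (1 : Fin n) ≠ 0 := by
    intro h
    have := congrArg Fin.val h
    rw [Fin.val_one'] at this
    simp at this
    omega
  have hWu : ∀ d : Fin n, d ≠ 0 → W d ≠ u := by
    intro d hd h
    apply hd
    have h2 := congrArg Prod.snd h
    simp only [hWdef] at h2
    exact add_eq_left.mp h2
  have hWb : ∀ d, b ≠ W d := by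
    intro d h
    exact hbu (by rw [h])
  have hbu' : b ≠ u := fun h => hbu (by rw [h])
  have hfne : ∀ d : Fin n, d ≠ 0 → fdet D b u (W d) ≠ 0 := by
    intro d hd
    exact fdet_ne D hbu' (hWb d) (fun h => (hWu d hd) h.symm)
  have key : ∃ d : Fin n, d ≠ 0 ∧ d + 1 ≠ 0 ∧
      fdet D b u (W d) * fdet D b u (W (d + 1)) < 0 := by
    by_contra hno
    push_neg at hno
    have chain : ∀ m : ℕ, 1 ≤ m → m ≤ n - 1 →
        (0 < fdet D b u (W ((m : ℕ) : Fin n)) ↔ 0 < fdet D b u (W ((1 : ℕ) : Fin n))) := by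
      intro m
      induction m with
      | zero => intro h1 _; exact absurd h1 (by norm_num)
      | succ m ih =>
        intro h1 h2
        rcases Nat.eq_or_lt_of_le h1 with he | hlt
        · rw [← he]
        · have hm1 : 1 ≤ m := by omega
          have hm2 : m ≤ n - 1 := by omega
          have hih := ih hm1 hm2
          have hval : ((m : ℕ) : Fin n).val = m := by
            rw [Fin.val_natCast]
            exact Nat.mod_eq_of_lt (by omega)
          have hval1 : (((m + 1 : ℕ)) : Fin n).val = m + 1 := by
            rw [Fin.val_natCast]
            exact Nat.mod_eq_of_lt (by omega)
          have hd0 : ((m : ℕ) : Fin n) ≠ 0 := by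
            intro h
            rw [h, Fin.val_zero] at hval
            omega
          have hcast : (((m + 1 : ℕ)) : Fin n) = ((m : ℕ) : Fin n) + 1 := by push_cast; ring
          have hd1 : ((m : ℕ) : Fin n) + 1 ≠ 0 := by
            rw [← hcast]
            intro h
            rw [h, Fin.val_zero] at hval1
            omega
          have hns := hno _ hd0 hd1
          have hsame := same_sign_of_not_neg (hfne _ hd0) (hfne _ hd1) (not_lt.mpr hns)
          rw [hcast]
          exact (hsame.symm).trans hih
    have hrep : ∀ z : Fin x × Fin n, z.1 = u.1 → z ≠ u →
        ∃ m : ℕ, 1 ≤ m ∧ m ≤ n - 1 ∧ W ((m : ℕ) : Fin n) = z := by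
      intro z hz1 hzu
      have hd : z.2 - u.2 ≠ 0 := sub_ne_zero.mpr (fun h => hzu (Prod.ext hz1 h))
      refine ⟨((z.2 - u.2 : Fin n) : ℕ), ?_, ?_, ?_⟩
      · have : ((z.2 - u.2 : Fin n) : ℕ) ≠ 0 := fun h => hd (Fin.ext h)
        omega
      · have := (z.2 - u.2).isLt
        omega
      · rw [Fin.cast_val_eq_self]
        show (u.1, u.2 + (z.2 - u.2)) = z
        have hsnd : u.2 + (z.2 - u.2) = z.2 := by rw [add_comm, sub_add_cancel]
        rw [hsnd, ← hz1]
    obtain ⟨mv, hmv1, hmv2, hmv⟩ := hrep v hv1 hvu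
    obtain ⟨mw, hmw1, hmw2, hmw⟩ := hrep w hw1 hwu
    have h1 := chain mv hmv1 hmv2
    have h2 := chain mw hmw1 hmw2
    rw [hmv] at h1
    rw [hmw] at h2
    have ha := h1.mp hvpos
    have hb := h2.mpr ha
    linarith
  obtain ⟨d, hd0, hd1, hsign⟩ := key
  refine ⟨s(W d, W (d + 1)), ⟨W d, W (d + 1), rfl, rfl, rfl⟩, ?_, ?_, ?_, ?_⟩
  · rw [SimpleGraph.mem_edgeSet, disjointCycles, SimpleGraph.fromRel_adj]
    constructor
    · intro h
      have h2 := congrArg Prod.snd h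
      simp only [hWdef] at h2
      rw [← add_assoc] at h2
      exact hone (left_eq_add.mp h2)
    · left
      refine ⟨rfl, ?_⟩
      show ((u.2 + d : Fin n).val + 1) % n = ((u.2 + (d + 1) : Fin n).val)
      rw [← add_assoc]
      have h1n : (1 : Fin n).val = 1 := by
        rw [Fin.val_one']
        exact Nat.mod_eq_of_lt (by omega)
      rw [Fin.val_add (u.2 + d) 1, h1n]
  · intro h
    rcases Sym2.eq_iff.mp h with ⟨h1, _⟩ | ⟨h1, _⟩
    · exact hbu (by rw [h1])
    · exact hbu (by rw [h1])
  · rw [Sym2.mk_isDiag_iff]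
    exact hbu'
  · exact ⟨b, u, W d, W (d + 1), rfl, rfl, cross_of_sign hsign⟩

end OrchardAux

namespace OrchardAux

open Finset

variable {x n : ℕ}

lemma ext_le_two (D : OrchardDrawing (disjointCycles x n)) (b : Fin x × Fin n) (i : Fin x)
    (hib : i ≠ b.1) [DecidablePred (NonExt D b)] :
    ((Finset.univ.filter (fun u : Fin x × Fin n => u.1 = i)).filter
      (fun u => ¬ NonExt D b u)).card ≤ 2 := by
  by_contra hcard
  push_neg at hcard
  obtain ⟨u₁, u₂, u₃, h1, h2, h3, h12, h13, h23⟩ := Finset.two_lt_card_iff.mp hcard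
  simp only [Finset.mem_filter, Finset.mem_univ, true_and] at h1 h2 h3
  obtain ⟨⟨hu1i, hnx1⟩⟩ := And.intro h1 trivial
  have hbu : ∀ u : Fin x × Fin n, u.1 = i → b ≠ u := by
    intro u hu h
    apply hib
    rw [← hu, ← h]
  have hall : ∀ u : Fin x × Fin n, u.1 = i → ¬ NonExt D b u →
      (∀ v : Fin x × Fin n, v.1 = i → v ≠ u → 0 < fdet D b u v) ∨
      (∀ v : Fin x × Fin n, v.1 = i → v ≠ u → fdet D b u v < 0) := by
    intro u hu hnx
    by_contra hcon
    push_neg at hcon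
    obtain ⟨⟨v, hv1, hv2, hv3⟩, ⟨w, hw1, hw2, hw3⟩⟩ := hcon
    have hvne := fdet_ne D (hbu u hu) (hbu v hv1) (fun h => hv2 h.symm)
    have hwne := fdet_ne D (hbu u hu) (hbu w hw1) (fun h => hw2 h.symm)
    apply hnx
    exact ⟨w, v, hw1.trans hu.symm, hv1.trans hu.symm, hw2, hv2,
      lt_of_le_of_ne hw3 (Ne.symm hwne),
      lt_of_le_of_ne hv3 hvne⟩
  rcases hall u₁ h1.1 h1.2 with H1 | H1 <;>
    rcases hall u₂ h2.1 h2.2 with H2 | H2 <;>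
      rcases hall u₃ h3.1 h3.2 with H3 | H3 <;>
  · have a12 := H1 u₂ h2.1 (Ne.symm h12)
    have a13 := H1 u₃ h3.1 (Ne.symm h13)
    have a21 := H2 u₁ h1.1 h12
    have a23 := H2 u₃ h3.1 (Ne.symm h23)
    have a31 := H3 u₁ h1.1 h13
    have a32 := H3 u₂ h2.1 h23
    have e1 := fdet_swap D b u₂ u₁
    have e2 := fdet_swap D b u₃ u₁
    have e3 := fdet_swap D b u₃ u₂
    linarith

lemma lower_bound (D : OrchardDrawing (disjointCycles x n)) (hn : 3 ≤ n) :
    n * (n - 2) * x * (x - 1) ≤ orchardCrossings D := by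
  classical
  rw [orchardCrossings_eq]
  have hex : ∀ p : {p : (Fin x × Fin n) × (Fin x × Fin n) //
        p.1.1 ≠ p.2.1 ∧ NonExt D p.1 p.2},
      ∃ q : {q // CrossCond D q},
        q.val.2 = s(p.val.1, p.val.2) ∧
        ∃ s t : Fin x × Fin n, q.val.1 = s(s, t) ∧ s.1 = p.val.2.1 ∧ t.1 = p.val.2.1 := by
    rintro ⟨⟨b, u⟩, hb, hne⟩
    obtain ⟨e, ⟨s, t, he, hs, ht⟩, hcc⟩ := nonext_crossing D hn hb hne
    exact ⟨⟨(e, s(b, u)), hcc⟩, rfl, s, t, he, hs, ht⟩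
  choose F h1 h2 using hex
  have hFinj : Function.Injective F := by
    intro p p' h
    obtain ⟨s1, t1, he1, hs1, ht1⟩ := h2 p
    obtain ⟨s2, t2, he2, hs2, ht2⟩ := h2 p'
    have hq2 : s(p.val.1, p.val.2) = s(p'.val.1, p'.val.2) := by
      rw [← h1 p, ← h1 p', h]
    rcases Sym2.eq_iff.mp hq2 with ⟨hb, hu⟩ | ⟨hb, hu⟩
    · exact Subtype.ext (Prod.ext hb hu)
    · exfalso
      have hee : s(s1, t1) = s(s2, t2) := by rw [← he1, ← he2, h]
      have hs2' : s2.1 = p.val.2.1 := by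
        rcases Sym2.eq_iff.mp hee with ⟨e1, _⟩ | ⟨_, e2⟩
        · rw [← e1]; exact hs1
        · rw [← e2]; exact ht1
      exact p.2.1 (by rw [hb, ← hs2]; exact hs2')
  have hcard1 : Nat.card {p : (Fin x × Fin n) × (Fin x × Fin n) //
      p.1.1 ≠ p.2.1 ∧ NonExt D p.1 p.2} ≤ Nat.card {q // CrossCond D q} :=
    Nat.card_le_card_of_injective F hFinj
  refine le_trans ?_ hcard1
  rw [Nat.card_eq_fintype_card, Fintype.card_subtype]
  -- fiberwise over the first component b
  have hfib : (Finset.univ.filter (fun p : (Fin x × Fin n) × (Fin x × Fin n) =>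
      p.1.1 ≠ p.2.1 ∧ NonExt D p.1 p.2)).card =
      ∑ b ∈ Finset.univ, ((Finset.univ.filter (fun p : (Fin x × Fin n) × (Fin x × Fin n) =>
        p.1.1 ≠ p.2.1 ∧ NonExt D p.1 p.2)).filter (fun p => p.1 = b)).card :=
    Finset.card_eq_sum_card_fiberwise (fun p _ => Finset.mem_univ p.1)
  rw [hfib]
  -- inner fiber card equals a filter over single vertices
  have hinner : ∀ b : Fin x × Fin n,
      ((Finset.univ.filter (fun p : (Fin x × Fin n) × (Fin x × Fin n) =>
        p.1.1 ≠ p.2.1 ∧ NonExt D p.1 p.2)).filter (fun p => p.1 = b)).card =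
      (Finset.univ.filter (fun u : Fin x × Fin n => b.1 ≠ u.1 ∧ NonExt D b u)).card := by
    intro b
    refine Finset.card_bij' (fun p _ => p.2) (fun u _ => (b, u)) ?_ ?_ ?_ ?_
    · intro p hp
      simp only [Finset.mem_filter, Finset.mem_univ, true_and] at hp ⊢
      obtain ⟨⟨hp1, hp2⟩, hp3⟩ := hp
      rw [← hp3]
      exact ⟨hp1, hp2⟩
    · intro u hu
      simp only [Finset.mem_filter, Finset.mem_univ, true_and] at hu ⊢
      exact ⟨hu, trivial⟩
    · intro p hp
      simp only [Finset.mem_filter, Finset.mem_univ, true_and] at hp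
      exact Prod.ext hp.2.symm rfl
    · intro u hu
      rfl
  -- per-b lower bound
  have hper : ∀ b : Fin x × Fin n,
      (x - 1) * (n - 2) ≤
      (Finset.univ.filter (fun u : Fin x × Fin n => b.1 ≠ u.1 ∧ NonExt D b u)).card := by
    intro b
    have hfib2 : (Finset.univ.filter (fun u : Fin x × Fin n =>
        b.1 ≠ u.1 ∧ NonExt D b u)).card =
        ∑ i ∈ Finset.univ, ((Finset.univ.filter (fun u : Fin x × Fin n =>
          b.1 ≠ u.1 ∧ NonExt D b u)).filter (fun u => u.1 = i)).card :=
      Finset.card_eq_sum_card_fiberwise (fun u _ => Finset.mem_univ u.1)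
    rw [hfib2]
    have hsub : ∑ i ∈ Finset.univ.erase b.1, ((Finset.univ.filter
        (fun u : Fin x × Fin n => b.1 ≠ u.1 ∧ NonExt D b u)).filter
          (fun u => u.1 = i)).card ≤ ∑ i ∈ Finset.univ, ((Finset.univ.filter
        (fun u : Fin x × Fin n => b.1 ≠ u.1 ∧ NonExt D b u)).filter
          (fun u => u.1 = i)).card :=
      Finset.sum_le_sum_of_subset (Finset.erase_subset _ _)
    refine le_trans ?_ hsub
    have hterm : ∀ i ∈ Finset.univ.erase b.1, n - 2 ≤ ((Finset.univ.filter
        (fun u : Fin x × Fin n => b.1 ≠ u.1 ∧ NonExt D b u)).filter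
          (fun u => u.1 = i)).card := by
      intro i hi
      have hib : i ≠ b.1 := (Finset.mem_erase.mp hi).1
      have heq : (Finset.univ.filter
          (fun u : Fin x × Fin n => b.1 ≠ u.1 ∧ NonExt D b u)).filter (fun u => u.1 = i) =
          (Finset.univ.filter (fun u : Fin x × Fin n => u.1 = i)).filter
            (fun u => NonExt D b u) := by
        ext u
        simp only [Finset.mem_filter, Finset.mem_univ, true_and]
        constructor
        · rintro ⟨⟨_, h2⟩, h3⟩
          exact ⟨h3, h2⟩
        · rintro ⟨h3, h2⟩
          exact ⟨⟨by rw [h3]; exact (Ne.symm hib), h2⟩, h3⟩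
      rw [heq]
      have hsplit := Finset.card_filter_add_card_filter_not
        (s := Finset.univ.filter (fun u : Fin x × Fin n => u.1 = i))
        (p := fun u => NonExt D b u)
      have hsi : (Finset.univ.filter (fun u : Fin x × Fin n => u.1 = i)).card = n := by
        have : Finset.univ.filter (fun u : Fin x × Fin n => u.1 = i) =
            ({i} : Finset (Fin x)) ×ˢ (Finset.univ : Finset (Fin n)) := by
          ext u
          simp only [Finset.mem_filter, Finset.mem_univ, true_and, Finset.mem_product,
            Finset.mem_singleton]
          constructor
          · intro h
            exact ⟨h, trivial⟩
          · rintro ⟨h, _⟩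
            exact h
        rw [this, Finset.card_product]
        simp
      have hext := ext_le_two D b i hib
      omega
    calc (x - 1) * (n - 2) = ∑ _i ∈ Finset.univ.erase b.1, (n - 2) := by
          rw [Finset.sum_const, smul_eq_mul]
          congr 1
          rw [Finset.card_erase_of_mem (Finset.mem_univ _), Finset.card_univ, Fintype.card_fin]
      _ ≤ _ := Finset.sum_le_sum hterm
  calc n * (n - 2) * x * (x - 1)
      = (x * n) * ((x - 1) * (n - 2)) := by
        obtain ⟨m, hm⟩ : ∃ m, n - 2 = m := ⟨_, rfl⟩
        obtain ⟨y, hy⟩ : ∃ y, x - 1 = y := ⟨_, rfl⟩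
        rw [hm, hy]
        ring
    _ = ∑ _b ∈ (Finset.univ : Finset (Fin x × Fin n)), ((x - 1) * (n - 2)) := by
        rw [Finset.sum_const, smul_eq_mul, Finset.card_univ, Fintype.card_prod,
          Fintype.card_fin, Fintype.card_fin]
    _ ≤ ∑ b ∈ Finset.univ, ((Finset.univ.filter (fun u : Fin x × Fin n =>
          b.1 ≠ u.1 ∧ NonExt D b u)).card) := Finset.sum_le_sum (fun b _ => hper b)
    _ = _ := by
        apply Finset.sum_congr rfl
        intro b _
        exact (hinner b).symm

end OrchardAux

theorem OCN_disjointCycles (n x : ℕ) (hn : 3 ≤ n) (hx : 1 ≤ x) :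
    OCN (disjointCycles x n) = n * (n - 2) * x * (x - 1) := by
  have hub := OrchardAux.upper_bound (x := x) (n := n) hn
  have hmem : orchardCrossings (OrchardAux.Dpar x n) ∈
      {m : ℕ | ∃ D : OrchardDrawing (disjointCycles x n), orchardCrossings D = m} :=
    ⟨_, rfl⟩
  have hnonempty : Set.Nonempty
      {m : ℕ | ∃ D : OrchardDrawing (disjointCycles x n), orchardCrossings D = m} :=
    ⟨_, hmem⟩
  apply le_antisymm
  · exact le_trans (Nat.sInf_le hmem) hub
  · obtain ⟨D0, hD0⟩ := Nat.sInf_mem hnonempty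
    show n * (n - 2) * x * (x - 1) ≤ sInf _
    rw [← hD0]
    exact OrchardAux.lower_bound D0 hn
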